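/- Assume quantile regression is under quasi-specification with coefficients (α^QR,β^QR). Set U_t^QR := 1_{{Y > α^QR(t)+β^QR(t)·X}} and U^QR := ∫₀¹ U_t^QR dt. Then: (i) U^QR is uniformly distributed on [0,1]; (ii) X is mean-independent of U^QR, i.e. 𝔼(X|U^QR) = 𝔼(X) = 0; (iii) Y = α^QR(U^QR) + β^QR(U^QR)·X almost surely. -/

import Mathlib

open MeasureTheory ProbabilityTheory Set
open scoped RealInnerProductSpace

noncomputable section

/-- **consequences of quasi-specification.** Assume quantile regression is under
quasi-specification with coefficients `(αQR, βQR)`. Set `U_t := 1_{Y > αQR(t) + ⟪βQR(t), X⟫}`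
and `U := ∫₀¹ U_t dt`. Then `U` is uniformly distributed on `[0,1]`, `X` is mean-independent of
`U` (`𝔼(X|U) = 𝔼(X) = 0`), and `Y = αQR(U) + ⟪βQR(U), X⟫` almost surely. -/
theorem quasi_specification_factorization
    {Ωs : Type*} [MeasurableSpace Ωs] (P : Measure Ωs) [IsProbabilityMeasure P]
    {N : ℕ}
    (X : Ωs → EuclideanSpace ℝ (Fin N)) (Y : Ωs → ℝ)
    (hX : Measurable X) (hY : Measurable Y)
    (hXbdd : ∃ C : ℝ, ∀ ω, ‖X ω‖ ≤ C) (hYbdd : ∃ C : ℝ, ∀ ω, |Y ω| ≤ C)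
    (hXcentered : ∫ ω, X ω ∂P = 0)
    -- m = Law(X) is nondegenerate: its support contains a ball centered at 0
    (m : Measure (EuclideanSpace ℝ (Fin N))) (hm : m = Measure.map X P)
    (hnondeg : ∃ r > (0:ℝ), ∀ x ∈ Metric.ball (0 : EuclideanSpace ℝ (Fin N)) r,
      ∀ s ∈ nhds x, 0 < m s)
    -- F is the conditional cdf of Y given X, Q the conditional quantile
    (F : EuclideanSpace ℝ (Fin N) → ℝ → ℝ)
    (hFmeas : Measurable (Function.uncurry F))
    (hF : ∀ y : ℝ, (fun ω => F (X ω) y) =ᵐ[P]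
      P[{ω | Y ω ≤ y}.indicator (fun _ => (1:ℝ)) | MeasurableSpace.comap X inferInstance])
    (Q : EuclideanSpace ℝ (Fin N) → ℝ → ℝ)
    (hQ : ∀ x t, Q x t = sInf {α : ℝ | F x α > t})
    (hQreg : ∀ᵐ x ∂m, ContinuousOn (Q x) (Icc 0 1) ∧ StrictMonoOn (Q x) (Icc 0 1))
    -- Law(X,Y) charges no nonvertical hyperplane
    (hNoHyper : ∀ (a : ℝ) (β : EuclideanSpace ℝ (Fin N)),
      P {ω | Y ω = a + ⟪β, X ω⟫} = 0)
    -- quasi-specification: continuous coefficients satisfying the Koenker-Bassett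
    -- first-order conditions, with the monotonicity property
    (αQR : ℝ → ℝ) (βQR : ℝ → EuclideanSpace ℝ (Fin N))
    (hαcont : ContinuousOn αQR (Icc 0 1)) (hβcont : ContinuousOn βQR (Icc 0 1))
    (hfoc1 : ∀ t ∈ Icc (0:ℝ) 1,
      P {ω | αQR t + ⟪βQR t, X ω⟫ < Y ω} = ENNReal.ofReal (1 - t))
    (hfoc2 : ∀ t ∈ Icc (0:ℝ) 1,
      ∫ ω in {ω | αQR t + ⟪βQR t, X ω⟫ < Y ω}, X ω ∂P = 0)
    (hmono : ∀ᵐ x ∂m, StrictMonoOn (fun t => αQR t + ⟪βQR t, x⟫) (Icc (0:ℝ) 1))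
    -- U^QR := ∫₀¹ 1_{Y > αQR(t) + ⟪βQR(t), X⟫} dt
    (UQR : Ωs → ℝ)
    (hUQR : ∀ ω, UQR ω = ∫ t in (0:ℝ)..1,
      if αQR t + ⟪βQR t, X ω⟫ < Y ω then (1:ℝ) else 0) :
    Measure.map UQR P = volume.restrict (Icc (0:ℝ) 1) ∧
    P[X | MeasurableSpace.comap UQR inferInstance] =ᵐ[P] 0 ∧
    ∀ᵐ ω ∂P, Y ω = αQR (UQR ω) + ⟪βQR (UQR ω), X ω⟫ := by

  classical
  obtain ⟨CX, hCX⟩ := hXbdd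
  -- the clamp function onto [0,1]
  set c : ℝ → ℝ := fun t => min 1 (max t 0) with hc_def
  have hc_mem : ∀ t, c t ∈ Icc (0:ℝ) 1 :=
    fun t => ⟨le_min zero_le_one (le_max_right _ _), min_le_left _ _⟩
  have hc_cont : Continuous c := continuous_const.min (continuous_id.max continuous_const)
  have hc_eq : ∀ t ∈ Icc (0:ℝ) 1, c t = t := by
    intro t ht
    simp only [hc_def]
    rw [max_eq_left ht.1, min_eq_right ht.2]
  -- globally continuous versions of the coefficients
  set α' : ℝ → ℝ := fun t => αQR (c t) with hα'_def
  set β' : ℝ → EuclideanSpace ℝ (Fin N) := fun t => βQR (c t) with hβ'_def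
  have hα'c : Continuous α' := hαcont.comp_continuous hc_cont hc_mem
  have hβ'c : Continuous β' := hβcont.comp_continuous hc_cont hc_mem
  have hα'eq : ∀ t ∈ Icc (0:ℝ) 1, α' t = αQR t := fun t ht => by
    simp only [hα'_def, hc_eq t ht]
  have hβ'eq : ∀ t ∈ Icc (0:ℝ) 1, β' t = βQR t := fun t ht => by
    simp only [hβ'_def, hc_eq t ht]
  set g : Ωs → ℝ → ℝ := fun ω t => α' t + ⟪β' t, X ω⟫ with hg_def
  have hgeq : ∀ ω, ∀ t ∈ Icc (0:ℝ) 1, g ω t = αQR t + ⟪βQR t, X ω⟫ := by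
    intro ω t ht
    simp only [hg_def, hα'eq t ht, hβ'eq t ht]
  -- rewrite UQR with the globally continuous coefficients
  have hUQR' : ∀ ω, UQR ω
      = ∫ t in Ioc (0:ℝ) 1, (if g ω t < Y ω then (1:ℝ) else 0) := by
    intro ω
    rw [hUQR ω, intervalIntegral.integral_of_le zero_le_one]
    refine setIntegral_congr_fun measurableSet_Ioc fun t ht => ?_
    rw [hgeq ω t (Ioc_subset_Icc_self ht)]
  -- measurability of UQR
  have hgm : Measurable fun p : Ωs × ℝ => g p.1 p.2 :=
    (hα'c.measurable.comp measurable_snd).add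
      ((hβ'c.measurable.comp measurable_snd).inner (hX.comp measurable_fst))
  have hUmeas : Measurable UQR := by
    have hfm : StronglyMeasurable fun p : Ωs × ℝ =>
        (if g p.1 p.2 < Y p.1 then (1:ℝ) else 0) :=
      (Measurable.ite (measurableSet_lt hgm (hY.comp measurable_fst))
        measurable_const measurable_const).stronglyMeasurable
    have : UQR = fun ω => ∫ t, (fun p : Ωs × ℝ =>
        (if g p.1 p.2 < Y p.1 then (1:ℝ) else 0)) (ω, t)
        ∂(volume.restrict (Ioc (0:ℝ) 1)) := funext hUQR'
    rw [this]
    exact hfm.integral_prod_right'.measurable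
  -- a.e. facts
  have hmono' : ∀ᵐ ω ∂P, StrictMonoOn (fun t => αQR t + ⟪βQR t, X ω⟫) (Icc (0:ℝ) 1) := by
    rw [hm] at hmono
    exact ae_of_ae_map hX.aemeasurable hmono
  have hmeas_set : ∀ t : ℝ, MeasurableSet {ω | αQR t + ⟪βQR t, X ω⟫ < Y ω} :=
    fun t => measurableSet_lt (measurable_const.add (measurable_const.inner hX)) hY
  have h0 : ∀ᵐ ω ∂P, αQR 0 + ⟪βQR 0, X ω⟫ < Y ω := by
    have h := hfoc1 0 ⟨le_refl 0, zero_le_one⟩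
    rw [sub_zero, ENNReal.ofReal_one] at h
    have hc : P {ω | αQR 0 + ⟪βQR 0, X ω⟫ < Y ω}ᶜ = 0 := by
      rw [prob_compl_eq_one_sub (hmeas_set 0), h, tsub_self]
    exact (MeasureTheory.ae_iff).mpr hc
  have h1 : ∀ᵐ ω ∂P, ¬ (αQR 1 + ⟪βQR 1, X ω⟫ < Y ω) := by
    have h := hfoc1 1 ⟨zero_le_one, le_refl 1⟩
    rw [sub_self, ENNReal.ofReal_zero] at h
    exact (MeasureTheory.ae_iff).mpr (by simpa only [not_not] using h)
  -- the good event
  have Hgood : ∀ᵐ ω ∂P, UQR ω ∈ Icc (0:ℝ) 1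
      ∧ Y ω = αQR (UQR ω) + ⟪βQR (UQR ω), X ω⟫
      ∧ StrictMonoOn (fun t => αQR t + ⟪βQR t, X ω⟫) (Icc (0:ℝ) 1) := by
    filter_upwards [hmono', h0, h1] with ω hmω h0ω h1ω
    have hgc : Continuous (g ω) := hα'c.add (hβ'c.inner continuous_const)
    have hsm : StrictMonoOn (g ω) (Icc (0:ℝ) 1) := by
      intro a ha b hb hab
      rw [hgeq ω a ha, hgeq ω b hb]
      exact hmω ha hb hab
    have h0' : g ω 0 < Y ω := by
      rw [hgeq ω 0 ⟨le_refl 0, zero_le_one⟩]; exact h0ω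
    have h1' : Y ω ≤ g ω 1 := by
      rw [hgeq ω 1 ⟨zero_le_one, le_refl 1⟩]; exact not_lt.mp h1ω
    obtain ⟨u, hu, hgu⟩ :=
      intermediate_value_Icc zero_le_one hgc.continuousOn ⟨h0'.le, h1'⟩
    -- the set of t with g ω t < Y ω inside Ioc 0 1 is Ioo 0 u
    have hiffset : ∀ t ∈ Ioc (0:ℝ) 1, (g ω t < Y ω ↔ t ∈ Ioo (0:ℝ) u) := by
      intro t ht
      have htIcc : t ∈ Icc (0:ℝ) 1 := Ioc_subset_Icc_self ht
      constructor
      · intro hlt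
        refine ⟨ht.1, ?_⟩
        by_contra hle
        push_neg at hle
        have := hsm.monotoneOn hu htIcc hle
        rw [hgu] at this
        exact absurd hlt (not_lt.mpr this)
      · intro htu
        have := hsm htIcc hu htu.2
        rwa [hgu] at this
    have hU : UQR ω = u := by
      rw [hUQR' ω]
      have step1 : ∫ t in Ioc (0:ℝ) 1, (if g ω t < Y ω then (1:ℝ) else 0)
          = ∫ t in Ioc (0:ℝ) 1, (Ioo (0:ℝ) u).indicator (fun _ => (1:ℝ)) t := by
        refine setIntegral_congr_fun measurableSet_Ioc fun t ht => ?_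
        rw [Set.indicator_apply]
        by_cases h : t ∈ Ioo (0:ℝ) u
        · rw [if_pos ((hiffset t ht).mpr h), if_pos h]
        · rw [if_neg (fun hh => h ((hiffset t ht).mp hh)), if_neg h]
      have hsub : Ioo (0:ℝ) u ⊆ Ioc (0:ℝ) 1 := fun s hs => ⟨hs.1, hs.2.le.trans hu.2⟩
      rw [step1, setIntegral_indicator measurableSet_Ioo,
        inter_eq_self_of_subset_right hsub,
        setIntegral_const, smul_eq_mul, mul_one, measureReal_def, Real.volume_Ioo, sub_zero,
        ENNReal.toReal_ofReal hu.1]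
    refine ⟨hU ▸ hu, ?_, hmω⟩
    rw [hU, ← hgeq ω u hu, hgu]
  -- the key distributional identity
  have hiff : ∀ t ∈ Icc (0:ℝ) 1,
      {ω | t < UQR ω} =ᵐ[P] {ω | αQR t + ⟪βQR t, X ω⟫ < Y ω} := by
    intro t ht
    rw [Filter.eventuallyEq_set]
    filter_upwards [Hgood] with ω hω
    obtain ⟨hUmem, hYeq, hsm⟩ := hω
    show t < UQR ω ↔ αQR t + ⟪βQR t, X ω⟫ < Y ω
    constructor
    · intro h
      rw [hYeq]
      exact hsm ht hUmem h
    · intro h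
      by_contra h'
      push_neg at h'
      have := hsm.monotoneOn hUmem ht h'
      rw [← hYeq] at this
      exact absurd h (not_lt.mpr this)
  have hmeasIoi : ∀ t ∈ Icc (0:ℝ) 1, P {ω | t < UQR ω} = ENNReal.ofReal (1 - t) :=
    fun t ht => (measure_congr (hiff t ht)).trans (hfoc1 t ht)
  -- part (i): the law of UQR
  haveI : IsProbabilityMeasure (Measure.map UQR P) :=
    Measure.isProbabilityMeasure_map hUmeas.aemeasurable
  have hlaw : Measure.map UQR P = volume.restrict (Icc (0:ℝ) 1) := by
    refine Measure.ext_of_Iic _ _ fun x => ?_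
    rw [Measure.map_apply hUmeas measurableSet_Iic,
      Measure.restrict_apply measurableSet_Iic]
    rcases lt_or_ge x 0 with hx | hx
    · have h1 : P (UQR ⁻¹' Iic x) = 0 := by
        have he : UQR ⁻¹' Iic x =ᵐ[P] (∅ : Set Ωs) := by
          rw [Filter.eventuallyEq_set]
          filter_upwards [Hgood] with ω hω
          simp only [mem_preimage, mem_Iic, mem_empty_iff_false, iff_false, not_le]
          exact lt_of_lt_of_le hx hω.1.1
        rw [measure_congr he, measure_empty]
      have h2 : Iic x ∩ Icc (0:ℝ) 1 = ∅ := by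
        ext t
        simp only [mem_inter_iff, mem_Iic, mem_Icc, mem_empty_iff_false, iff_false]
        rintro ⟨h1t, h2t, _⟩
        linarith
      rw [h1, h2, measure_empty]
    rcases le_or_gt x 1 with hx1 | hx1
    · have hpre : UQR ⁻¹' Iic x = {ω | x < UQR ω}ᶜ := by
        ext ω
        simp [not_lt]
      rw [hpre, prob_compl_eq_one_sub (measurableSet_lt measurable_const hUmeas),
        hmeasIoi x ⟨hx, hx1⟩]
      have h2 : Iic x ∩ Icc (0:ℝ) 1 = Icc 0 x := by
        ext t
        simp only [mem_inter_iff, mem_Iic, mem_Icc]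
        constructor
        · rintro ⟨h1t, h2t, _⟩; exact ⟨h2t, h1t⟩
        · rintro ⟨h1t, h2t⟩; exact ⟨h2t, h1t, h2t.trans hx1⟩
      rw [h2, Real.volume_Icc, sub_zero]
      rw [show (1 : ENNReal) = ENNReal.ofReal 1 from ENNReal.ofReal_one.symm,
        ← ENNReal.ofReal_sub 1 (by linarith)]
      norm_num
    · have h1 : P (UQR ⁻¹' Iic x) = 1 := by
        have : UQR ⁻¹' Iic x =ᵐ[P] (univ : Set Ωs) := by
          rw [Filter.eventuallyEq_set]
          filter_upwards [Hgood] with ω hω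
          simp only [mem_preimage, mem_Iic, mem_univ, iff_true]
          exact hω.1.2.trans hx1.le
        rw [measure_congr this, measure_univ]
      have h2 : Iic x ∩ Icc (0:ℝ) 1 = Icc 0 1 :=
        inter_eq_self_of_subset_right (fun t ht => ht.2.trans hx1.le)
      rw [h1, h2, Real.volume_Icc]
      norm_num
  -- part (ii): mean independence
  have hXint : Integrable X P :=
    ⟨hX.aestronglyMeasurable, HasFiniteIntegral.of_bounded (Filter.Eventually.of_forall hCX)⟩
  have hIoi : ∀ t : ℝ, ∫ ω in UQR ⁻¹' Ioi t, X ω ∂P = 0 := by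
    intro t
    have hpre : UQR ⁻¹' Ioi t = {ω | t < UQR ω} := rfl
    rcases lt_or_ge t 0 with ht | ht
    · have huniv : UQR ⁻¹' Ioi t =ᵐ[P] (univ : Set Ωs) := by
        rw [Filter.eventuallyEq_set]
        filter_upwards [Hgood] with ω hω
        simp only [mem_preimage, mem_Ioi, mem_univ, iff_true]
        exact lt_of_lt_of_le ht hω.1.1
      rw [setIntegral_congr_set huniv, Measure.restrict_univ]
      exact hXcentered
    rcases le_or_gt 1 t with ht1 | ht1
    · have hnull : P (UQR ⁻¹' Ioi t) = 0 := by
        have he : UQR ⁻¹' Ioi t =ᵐ[P] (∅ : Set Ωs) := by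
          rw [Filter.eventuallyEq_set]
          filter_upwards [Hgood] with ω hω
          simp only [mem_preimage, mem_Ioi, mem_empty_iff_false, iff_false, not_lt]
          exact hω.1.2.trans ht1
        rw [measure_congr he, measure_empty]
      rw [Measure.restrict_eq_zero.mpr hnull, integral_zero_measure]
    · rw [hpre, setIntegral_congr_set (hiff t ⟨ht, ht1.le⟩)]
      exact hfoc2 t ⟨ht, ht1.le⟩
  have hsetint : ∀ B : Set ℝ, MeasurableSet B → ∫ ω in UQR ⁻¹' B, X ω ∂P = 0 := by
    have hgen : (inferInstance : MeasurableSpace ℝ)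
        = MeasurableSpace.generateFrom (range Ioi) :=
      BorelSpace.measurable_eq.trans (borel_eq_generateFrom_Ioi ℝ)
    refine MeasurableSpace.induction_on_inter hgen isPiSystem_Ioi ?_ ?_ ?_ ?_
    · simp
    · rintro _ ⟨t, rfl⟩
      exact hIoi t
    · intro s hs hC
      have := integral_add_compl (hUmeas hs) hXint
      rw [hC, zero_add] at this
      rw [preimage_compl, this, hXcentered]
    · intro f hdisj hmeasf hC
      rw [preimage_iUnion,
        integral_iUnion (fun i => hUmeas (hmeasf i))
          (hdisj.mono fun i j h => h.preimage _) hXint.integrableOn]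
      simp [hC]
  have hcond : P[X | MeasurableSpace.comap UQR inferInstance] =ᵐ[P] 0 := by
    have hm_le : MeasurableSpace.comap UQR inferInstance ≤ _ := hUmeas.comap_le
    refine (ae_eq_condExp_of_forall_setIntegral_eq hm_le hXint
      (fun s _ _ => integrableOn_zero) ?_ ?_).symm
    · rintro s ⟨B, hB, rfl⟩ _
      rw [hsetint B hB]
      simp
    · exact ⟨fun _ => 0, @stronglyMeasurable_zero _ _ (MeasurableSpace.comap UQR inferInstance) _ _,
        Filter.EventuallyEq.rfl⟩
  refine ⟨hlaw, hcond, ?_⟩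
  filter_upwards [Hgood] with ω hω
  exact hω.2.1
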